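/- Let U ⊆ ℝⁿ be open, let k ≥ 0 be an integer, let 1 ≤ p < ∞, and let C > 0. Let a₁, …, a_N : U → ℝ be smooth functions that are bounded together with all their derivatives up to order k, and set P(u) = Σ_{i=1}^N aᵢ uⁱ (note: no constant term). Then there exists a constant C′ (depending only on n, k, p, N, C, and the bounds on the aᵢ and their derivatives) such that for every u ∈ W^{k,p}(U) satisfying ‖D^j u‖_{L∞(U)} ≤ C for all 0 ≤ j ≤ k, one has ‖P(u)‖_{W^{k,p}(U)} ≤ C′ ‖u‖_{W^{k,p}(U)}, where ‖f‖_{W^{k,p}(U)} = Σ_{j=0}^k ‖D^j f‖_{L^p(U)}. -/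

import Mathlib

open MeasureTheory Filter Topology
open scoped ENNReal

noncomputable section

/-- Euclidean space `ℝⁿ`. -/
abbrev Spc (n : ℕ) := EuclideanSpace ℝ (Fin n)

/-- The Sobolev norm `‖f‖_{W^{k,p}(U)} = ∑_{j=0}^k ‖D^j f‖_{L^p(U)}`, valued in `ℝ≥0∞`;
`f ∈ W^{k,p}(U)` means this quantity is finite. -/
noncomputable def sobolevNorm {n : ℕ} (U : Set (Spc n)) (k : ℕ) (p : ℝ) (f : Spc n → ℝ) :
    ℝ≥0∞ :=
  ∑ j ∈ Finset.range (k + 1),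
    (∫⁻ x in U, ENNReal.ofReal (‖iteratedFDerivWithin ℝ j f U x‖ ^ p)) ^ (1 / p)

/-- Minkowski's inequality for finite sums in `ℝ≥0∞`. -/
private lemma lp_sum_le {α : Type*} [MeasurableSpace α] (μ : Measure α) {ι : Type*}
    (s : Finset ι) (f : ι → α → ℝ≥0∞) (hf : ∀ i ∈ s, AEMeasurable (f i) μ)
    {p : ℝ} (hp : 1 ≤ p) :
    (∫⁻ x, (∑ i ∈ s, f i x) ^ p ∂μ) ^ (1 / p) ≤
      ∑ i ∈ s, (∫⁻ x, (f i x) ^ p ∂μ) ^ (1 / p) := by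
  have hp0 : (0 : ℝ) < p := lt_of_lt_of_le one_pos hp
  induction s using Finset.cons_induction with
  | empty =>
    simp only [Finset.sum_empty, ENNReal.zero_rpow_of_pos hp0, lintegral_zero]
    exact le_of_eq (ENNReal.zero_rpow_of_pos (by positivity))
  | cons a s ha ih =>
    simp only [Finset.sum_cons]
    calc (∫⁻ x, (f a x + ∑ i ∈ s, f i x) ^ p ∂μ) ^ (1 / p)
        ≤ (∫⁻ x, (f a x) ^ p ∂μ) ^ (1 / p) +
            (∫⁻ x, (∑ i ∈ s, f i x) ^ p ∂μ) ^ (1 / p) :=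
          ENNReal.lintegral_Lp_add_le (hf a (Finset.mem_cons_self a s))
            (Finset.aemeasurable_fun_sum s fun i hi => hf i (Finset.mem_cons_of_mem hi)) hp
      _ ≤ _ := add_le_add_right (ih fun i hi => hf i (Finset.mem_cons_of_mem hi)) _

/-- Pointwise bound on derivatives of powers of `u`. -/
private lemma pow_deriv_bound {n k : ℕ} {U : Set (Spc n)} (hUD : UniqueDiffOn ℝ U)
    {u : Spc n → ℝ} (hu : ContDiffOn ℝ (k : ℕ∞) u U)
    {C : ℝ} (hC : 0 < C)
    (hbd : ∀ j ≤ k, ∀ x ∈ U, ‖iteratedFDerivWithin ℝ j u U x‖ ≤ C)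
    (i : ℕ) : ∀ m ≤ k, ∀ x ∈ U,
      ‖iteratedFDerivWithin ℝ m (fun y => u y ^ (i + 1)) U x‖ ≤
        (2 ^ k * C) ^ i *
          ∑ j ∈ Finset.range (k + 1), ‖iteratedFDerivWithin ℝ j u U x‖ := by
  induction i with
  | zero =>
    intro m hm x hx
    simp only [pow_zero, one_mul, zero_add, pow_one]
    exact Finset.single_le_sum (f := fun j => ‖iteratedFDerivWithin ℝ j u U x‖)
      (fun j _ => norm_nonneg _) (Finset.mem_range.2 (Nat.lt_succ_of_le hm))
  | succ i ih =>
    intro m hm x hx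
    set S := ∑ j ∈ Finset.range (k + 1), ‖iteratedFDerivWithin ℝ j u U x‖ with hSdef
    have hS0 : 0 ≤ S := Finset.sum_nonneg fun _ _ => norm_nonneg _
    have heq : (fun y => u y ^ (i + 1 + 1)) = fun y => u y ^ (i + 1) * u y := by
      funext y; ring
    rw [heq]
    have key := norm_iteratedFDerivWithin_mul_le (𝕜 := ℝ)
      (f := fun y => u y ^ (i + 1)) (g := u) (hu.pow (i + 1)) hu hUD hx
      (n := m) (by exact_mod_cast hm)
    refine key.trans ?_
    have hterm : ∀ l ∈ Finset.range (m + 1),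
        (m.choose l : ℝ) * ‖iteratedFDerivWithin ℝ l (fun y => u y ^ (i + 1)) U x‖ *
          ‖iteratedFDerivWithin ℝ (m - l) u U x‖ ≤
        (m.choose l : ℝ) * ((2 ^ k * C) ^ i * S * C) := by
      intro l hl
      have hlk : l ≤ k := le_trans (Nat.lt_succ_iff.mp (Finset.mem_range.mp hl)) hm
      have h1 := ih l hlk x hx
      have h2 := hbd (m - l) (le_trans (Nat.sub_le m l) hm) x hx
      calc (m.choose l : ℝ) * ‖iteratedFDerivWithin ℝ l (fun y => u y ^ (i + 1)) U x‖ *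
            ‖iteratedFDerivWithin ℝ (m - l) u U x‖
          ≤ (m.choose l : ℝ) * ((2 ^ k * C) ^ i * S) * C :=
            mul_le_mul (mul_le_mul_of_nonneg_left h1 (Nat.cast_nonneg _)) h2 (norm_nonneg _)
              (mul_nonneg (Nat.cast_nonneg _) (mul_nonneg (by positivity) hS0))
        _ = (m.choose l : ℝ) * ((2 ^ k * C) ^ i * S * C) := by ring
    calc ∑ l ∈ Finset.range (m + 1),
          (m.choose l : ℝ) * ‖iteratedFDerivWithin ℝ l (fun y => u y ^ (i + 1)) U x‖ *
            ‖iteratedFDerivWithin ℝ (m - l) u U x‖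
        ≤ ∑ l ∈ Finset.range (m + 1),
            (m.choose l : ℝ) * ((2 ^ k * C) ^ i * S * C) :=
          Finset.sum_le_sum hterm
      _ = (∑ l ∈ Finset.range (m + 1), (m.choose l : ℝ)) * ((2 ^ k * C) ^ i * S * C) := by
          rw [← Finset.sum_mul]
      _ = (2 ^ m : ℝ) * ((2 ^ k * C) ^ i * S * C) := by
          rw [← Nat.cast_sum, Nat.sum_range_choose]; push_cast; ring
      _ ≤ (2 ^ k : ℝ) * ((2 ^ k * C) ^ i * S * C) := by
          have h2m : (2 : ℝ) ^ m ≤ 2 ^ k := pow_le_pow_right₀ one_le_two hm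
          have : (0 : ℝ) ≤ (2 ^ k * C) ^ i * S * C := by positivity
          exact mul_le_mul_of_nonneg_right h2m this
      _ = (2 ^ k * C) ^ (i + 1) * S := by ring

/-- Let `U ⊆ ℝⁿ` be open, `k ≥ 0`, `1 ≤ p < ∞`, `C > 0`. Let
`a₁, …, a_N` be smooth on `U`, bounded with all derivatives up to order `k` bounded, and
let `P(u) = ∑_{i=1}^N aᵢ uⁱ` (no constant term). Then there is `C' < ∞`, depending only on
the data and not on `u`, such that every `u ∈ W^{k,p}(U)` whose derivatives
`D^j u`, `0 ≤ j ≤ k`, are bounded by `C` on `U` satisfies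
`‖P(u)‖_{W^{k,p}(U)} ≤ C' ‖u‖_{W^{k,p}(U)}`. -/
theorem polynomial_sobolev_bound
    {n N k : ℕ} (hN : 1 ≤ N)
    (U : Set (Spc n)) (hU : IsOpen U)
    (p : ℝ) (hp : 1 ≤ p)
    (C : ℝ) (hC : 0 < C)
    (a : Fin N → Spc n → ℝ)
    (ha_smooth : ∀ i, ContDiffOn ℝ (k : ℕ∞) (a i) U)
    (B : ℝ) (haB : ∀ i, ∀ j ≤ k, ∀ x ∈ U, ‖iteratedFDerivWithin ℝ j (a i) U x‖ ≤ B) :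
    ∃ C' : ℝ≥0∞, C' < ⊤ ∧
      ∀ u : Spc n → ℝ, ContDiffOn ℝ (k : ℕ∞) u U →
        sobolevNorm U k p u < ⊤ →
        (∀ j ≤ k, ∀ x ∈ U, ‖iteratedFDerivWithin ℝ j u U x‖ ≤ C) →
        sobolevNorm U k p (fun x => ∑ i : Fin N, a i x * u x ^ ((i : ℕ) + 1)) ≤
          C' * sobolevNorm U k p u := by
  have hUD : UniqueDiffOn ℝ U := hU.uniqueDiffOn
  have hp0 : (0 : ℝ) < p := lt_of_lt_of_le one_pos hp
  set B' : ℝ := max B 0 with hB'def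
  have hB0 : 0 ≤ B' := le_max_right _ _
  set M : ℝ := ∑ i : Fin N, 2 ^ k * B' * (2 ^ k * C) ^ (i : ℕ) with hMdef
  have hM0 : 0 ≤ M := Finset.sum_nonneg fun i _ => by positivity
  refine ⟨(k + 1 : ℕ) * ENNReal.ofReal M, ?_, ?_⟩
  · exact ENNReal.mul_lt_top (by simp) ENNReal.ofReal_lt_top
  intro u hu hfin hubd
  -- pointwise bound
  have hpt : ∀ j ≤ k, ∀ x ∈ U,
      ‖iteratedFDerivWithin ℝ j (fun x => ∑ i : Fin N, a i x * u x ^ ((i : ℕ) + 1)) U x‖ ≤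
        M * ∑ j' ∈ Finset.range (k + 1), ‖iteratedFDerivWithin ℝ j' u U x‖ := by
    intro j hj x hx
    have hsum : iteratedFDerivWithin ℝ j
          (fun x => ∑ i : Fin N, a i x * u x ^ ((i : ℕ) + 1)) U x =
        ∑ i : Fin N, iteratedFDerivWithin ℝ j
          (fun x => a i x * u x ^ ((i : ℕ) + 1)) U x := by
      have h : iteratedFDerivWithin ℝ j (∑ i : Fin N, fun x => a i x * u x ^ ((i : ℕ) + 1)) U x =
          ∑ i : Fin N, iteratedFDerivWithin ℝ j (fun x => a i x * u x ^ ((i : ℕ) + 1)) U x :=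
        iteratedFDerivWithin_sum_apply hUD hx
          (fun i _ => (((ha_smooth i).mul (hu.pow _)).contDiffWithinAt hx).of_le (by exact_mod_cast hj))
      simpa only [Finset.sum_fn] using h
    rw [hsum]
    refine (norm_sum_le _ _).trans ?_
    set S := ∑ j' ∈ Finset.range (k + 1), ‖iteratedFDerivWithin ℝ j' u U x‖ with hSdef
    have hS0 : 0 ≤ S := Finset.sum_nonneg fun _ _ => norm_nonneg _
    rw [hMdef, Finset.sum_mul]
    refine Finset.sum_le_sum fun i _ => ?_
    have key := norm_iteratedFDerivWithin_mul_le (𝕜 := ℝ)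
      (f := a i) (g := fun y => u y ^ ((i : ℕ) + 1)) (ha_smooth i)
      (hu.pow ((i : ℕ) + 1)) hUD hx (n := j) (by exact_mod_cast hj)
    refine key.trans ?_
    have hterm : ∀ l ∈ Finset.range (j + 1),
        (j.choose l : ℝ) * ‖iteratedFDerivWithin ℝ l (a i) U x‖ *
          ‖iteratedFDerivWithin ℝ (j - l) (fun y => u y ^ ((i : ℕ) + 1)) U x‖ ≤
        (j.choose l : ℝ) * (B' * ((2 ^ k * C) ^ (i : ℕ) * S)) := by
      intro l hl
      have hlk : l ≤ k := le_trans (Nat.lt_succ_iff.mp (Finset.mem_range.mp hl)) hj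
      have h1 : ‖iteratedFDerivWithin ℝ l (a i) U x‖ ≤ B' :=
        (haB i l hlk x hx).trans (le_max_left _ _)
      have h2 := pow_deriv_bound hUD hu hC hubd (i : ℕ) (j - l)
        (le_trans (Nat.sub_le j l) hj) x hx
      calc (j.choose l : ℝ) * ‖iteratedFDerivWithin ℝ l (a i) U x‖ *
            ‖iteratedFDerivWithin ℝ (j - l) (fun y => u y ^ ((i : ℕ) + 1)) U x‖
          ≤ (j.choose l : ℝ) * B' * ((2 ^ k * C) ^ (i : ℕ) * S) :=
            mul_le_mul (mul_le_mul_of_nonneg_left h1 (Nat.cast_nonneg _)) h2 (norm_nonneg _)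
              (mul_nonneg (Nat.cast_nonneg _) hB0)
        _ = (j.choose l : ℝ) * (B' * ((2 ^ k * C) ^ (i : ℕ) * S)) := by ring
    calc ∑ l ∈ Finset.range (j + 1),
          (j.choose l : ℝ) * ‖iteratedFDerivWithin ℝ l (a i) U x‖ *
            ‖iteratedFDerivWithin ℝ (j - l) (fun y => u y ^ ((i : ℕ) + 1)) U x‖
        ≤ ∑ l ∈ Finset.range (j + 1),
            (j.choose l : ℝ) * (B' * ((2 ^ k * C) ^ (i : ℕ) * S)) :=
          Finset.sum_le_sum hterm
      _ = (∑ l ∈ Finset.range (j + 1), (j.choose l : ℝ)) *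
            (B' * ((2 ^ k * C) ^ (i : ℕ) * S)) := by rw [← Finset.sum_mul]
      _ = (2 ^ j : ℝ) * (B' * ((2 ^ k * C) ^ (i : ℕ) * S)) := by
          rw [← Nat.cast_sum, Nat.sum_range_choose]; push_cast; ring
      _ ≤ (2 ^ k : ℝ) * (B' * ((2 ^ k * C) ^ (i : ℕ) * S)) := by
          have h2m : (2 : ℝ) ^ j ≤ 2 ^ k := pow_le_pow_right₀ one_le_two hj
          have hnn : (0 : ℝ) ≤ B' * ((2 ^ k * C) ^ (i : ℕ) * S) := by positivity
          exact mul_le_mul_of_nonneg_right h2m hnn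
      _ = 2 ^ k * B' * (2 ^ k * C) ^ (i : ℕ) * S := by ring
  -- rewrite the Sobolev norm with `ENNReal` powers
  have hsob : ∀ f : Spc n → ℝ, sobolevNorm U k p f =
      ∑ j ∈ Finset.range (k + 1),
        (∫⁻ x in U, (ENNReal.ofReal ‖iteratedFDerivWithin ℝ j f U x‖) ^ p) ^ (1 / p) := by
    intro f
    unfold sobolevNorm
    refine Finset.sum_congr rfl fun j _ => ?_
    congr 1
    exact lintegral_congr fun x =>
      (ENNReal.ofReal_rpow_of_nonneg (norm_nonneg _) hp0.le).symm
  -- measurability of the derivative norms of `u`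
  have hmeas : ∀ j ∈ Finset.range (k + 1),
      AEMeasurable (fun x => ENNReal.ofReal ‖iteratedFDerivWithin ℝ j u U x‖)
        (volume.restrict U) := by
    intro j hj
    have hjk : j ≤ k := Nat.lt_succ_iff.mp (Finset.mem_range.mp hj)
    exact ENNReal.measurable_ofReal.comp_aemeasurable
      (((hu.continuousOn_iteratedFDerivWithin (by exact_mod_cast hjk) hUD).norm).aemeasurable
        hU.measurableSet)
  rw [hsob, hsob]
  have hMne : (ENNReal.ofReal M) ^ p ≠ ⊤ :=
    ENNReal.rpow_ne_top_of_nonneg hp0.le ENNReal.ofReal_ne_top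
  -- bound each summand
  have hterm : ∀ j ∈ Finset.range (k + 1),
      (∫⁻ x in U, (ENNReal.ofReal ‖iteratedFDerivWithin ℝ j
          (fun x => ∑ i : Fin N, a i x * u x ^ ((i : ℕ) + 1)) U x‖) ^ p) ^ (1 / p) ≤
      ENNReal.ofReal M * ∑ j' ∈ Finset.range (k + 1),
        (∫⁻ x in U, (ENNReal.ofReal ‖iteratedFDerivWithin ℝ j' u U x‖) ^ p) ^ (1 / p) := by
    intro j hj
    have hjk : j ≤ k := Nat.lt_succ_iff.mp (Finset.mem_range.mp hj)
    have step1 : (∫⁻ x in U, (ENNReal.ofReal ‖iteratedFDerivWithin ℝ j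
          (fun x => ∑ i : Fin N, a i x * u x ^ ((i : ℕ) + 1)) U x‖) ^ p) ≤
        ∫⁻ x in U, (ENNReal.ofReal M *
          ∑ j' ∈ Finset.range (k + 1),
            ENNReal.ofReal ‖iteratedFDerivWithin ℝ j' u U x‖) ^ p := by
      refine lintegral_mono_ae ((ae_restrict_iff' hU.measurableSet).2 ?_)
      refine Filter.Eventually.of_forall fun x hx => ?_
      refine ENNReal.rpow_le_rpow ?_ hp0.le
      calc ENNReal.ofReal ‖iteratedFDerivWithin ℝ j
            (fun x => ∑ i : Fin N, a i x * u x ^ ((i : ℕ) + 1)) U x‖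
          ≤ ENNReal.ofReal (M *
              ∑ j' ∈ Finset.range (k + 1), ‖iteratedFDerivWithin ℝ j' u U x‖) :=
            ENNReal.ofReal_le_ofReal (hpt j hjk x hx)
        _ = ENNReal.ofReal M * ENNReal.ofReal
              (∑ j' ∈ Finset.range (k + 1), ‖iteratedFDerivWithin ℝ j' u U x‖) :=
            ENNReal.ofReal_mul hM0
        _ = ENNReal.ofReal M * ∑ j' ∈ Finset.range (k + 1),
              ENNReal.ofReal ‖iteratedFDerivWithin ℝ j' u U x‖ := by
            rw [ENNReal.ofReal_sum_of_nonneg fun _ _ => norm_nonneg _]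
    calc (∫⁻ x in U, (ENNReal.ofReal ‖iteratedFDerivWithin ℝ j
          (fun x => ∑ i : Fin N, a i x * u x ^ ((i : ℕ) + 1)) U x‖) ^ p) ^ (1 / p)
        ≤ (∫⁻ x in U, (ENNReal.ofReal M *
            ∑ j' ∈ Finset.range (k + 1),
              ENNReal.ofReal ‖iteratedFDerivWithin ℝ j' u U x‖) ^ p) ^ (1 / p) :=
          ENNReal.rpow_le_rpow step1 (by positivity)
      _ = ((ENNReal.ofReal M) ^ p * ∫⁻ x in U,
            (∑ j' ∈ Finset.range (k + 1),
              ENNReal.ofReal ‖iteratedFDerivWithin ℝ j' u U x‖) ^ p) ^ (1 / p) := by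
          rw [← lintegral_const_mul' _ _ hMne]
          congr 1
          exact lintegral_congr fun x => ENNReal.mul_rpow_of_nonneg _ _ hp0.le
      _ = ENNReal.ofReal M * (∫⁻ x in U,
            (∑ j' ∈ Finset.range (k + 1),
              ENNReal.ofReal ‖iteratedFDerivWithin ℝ j' u U x‖) ^ p) ^ (1 / p) := by
          rw [ENNReal.mul_rpow_of_nonneg _ _ (by positivity : (0:ℝ) ≤ 1 / p),
            ← ENNReal.rpow_mul, mul_one_div_cancel hp0.ne', ENNReal.rpow_one]
      _ ≤ ENNReal.ofReal M * ∑ j' ∈ Finset.range (k + 1),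
            (∫⁻ x in U, (ENNReal.ofReal ‖iteratedFDerivWithin ℝ j' u U x‖) ^ p) ^ (1 / p) :=
          mul_le_mul_right (lp_sum_le _ _ _ hmeas hp) _
  calc ∑ j ∈ Finset.range (k + 1),
        (∫⁻ x in U, (ENNReal.ofReal ‖iteratedFDerivWithin ℝ j
          (fun x => ∑ i : Fin N, a i x * u x ^ ((i : ℕ) + 1)) U x‖) ^ p) ^ (1 / p)
      ≤ ∑ j ∈ Finset.range (k + 1), (ENNReal.ofReal M *
          ∑ j' ∈ Finset.range (k + 1),
            (∫⁻ x in U, (ENNReal.ofReal ‖iteratedFDerivWithin ℝ j' u U x‖) ^ p) ^ (1 / p)) :=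
        Finset.sum_le_sum hterm
    _ = (k + 1 : ℕ) * ENNReal.ofReal M *
          ∑ j' ∈ Finset.range (k + 1),
            (∫⁻ x in U, (ENNReal.ofReal ‖iteratedFDerivWithin ℝ j' u U x‖) ^ p) ^ (1 / p) := by
        rw [Finset.sum_const, Finset.card_range, nsmul_eq_mul]
        ring

end
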